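/- Let D be an integral domain with quotient field K. Then D is an AV-domain if and only if the integral closure D̄ of D in K is a valuation domain and D ⊆ D̄ is a root extension. -/

import Mathlib

open Polynomial

/-- `D` is an almost valuation (AV-) domain: for all nonzero `a b : D` there is a positive
integer `n` with `a ^ n ∣ b ^ n` or `b ^ n ∣ a ^ n`. -/
def IsAVDomain (D : Type*) [CommRing D] : Prop :=
  ∀ a b : D, a ≠ 0 → b ≠ 0 → ∃ n : ℕ, 0 < n ∧ (a ^ n ∣ b ^ n ∨ b ^ n ∣ a ^ n)

section aux

variable {D K : Type*} [CommRing D] [IsDomain D] [Field K] [Algebra D K] [IsFractionRing D K]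

lemma mem_range_of_isIntegral_of_inv (y : K) (hy : IsIntegral D y) (d : D)
    (hd : y * algebraMap D K d = 1) : y ∈ (algebraMap D K).range := by
  obtain ⟨p, pm, hp⟩ := hy
  set m := p.natDegree with hm
  have hm0 : 0 < m := by
    rcases Nat.eq_zero_or_pos m with h | h
    · exfalso
      have hp1 : p = 1 := Polynomial.eq_one_of_monic_natDegree_zero pm h
      rw [hp1] at hp
      simp at hp
    · exact h
  have hp' : ∑ i ∈ Finset.range (m + 1), algebraMap D K (p.coeff i) * y ^ i = 0 := by
    have h0 := Polynomial.aeval_eq_sum_range (R := D) (p := p) y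
    have h1 : ∑ i ∈ Finset.range (m + 1), p.coeff i • y ^ i = 0 := h0.symm.trans hp
    rw [← h1]
    exact Finset.sum_congr rfl fun i _ => (Algebra.smul_def _ _).symm
  have hsplit : y ^ m = -∑ i ∈ Finset.range m, algebraMap D K (p.coeff i) * y ^ i := by
    rw [Finset.sum_range_succ] at hp'
    have hc : p.coeff m = 1 := pm.coeff_natDegree
    rw [hc, map_one, one_mul] at hp'
    linear_combination hp'
  set d' := algebraMap D K d with hd'
  -- y = y^m * d'^(m-1)
  have hyd : ∀ i : ℕ, y ^ i * d' ^ i = 1 := by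
    intro i
    rw [← mul_pow, hd, one_pow]
  have key : y = y ^ m * d' ^ (m - 1) := by
    conv_lhs => rw [← mul_one y, ← hyd (m - 1)]
    rw [← mul_assoc, ← pow_succ']
    congr 2
    omega
  refine ⟨-∑ i ∈ Finset.range m, p.coeff i * d ^ (m - 1 - i), ?_⟩
  rw [map_neg, map_sum, key, hsplit, neg_mul, Finset.sum_mul]
  congr 1
  refine Finset.sum_congr rfl fun i hi => ?_
  rw [Finset.mem_range] at hi
  rw [map_mul, map_pow, ← hd']
  rw [mul_assoc]
  congr 1
  calc d' ^ (m - 1 - i) = 1 * d' ^ (m - 1 - i) := (one_mul _).symm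
    _ = (y ^ i * d' ^ i) * d' ^ (m - 1 - i) := by rw [hyd]
    _ = y ^ i * (d' ^ i * d' ^ (m - 1 - i)) := by ring
    _ = y ^ i * d' ^ (m - 1) := by rw [← pow_add]; congr 2; omega

lemma av_dichotomy (h : IsAVDomain D) (x : K) (hx : x ≠ 0) :
    ∃ n : ℕ, 0 < n ∧ (x ^ n ∈ (algebraMap D K).range ∨ (x ^ n)⁻¹ ∈ (algebraMap D K).range) := by
  obtain ⟨a, b, hb, hab⟩ := IsFractionRing.div_surjective (A := D) x
  have hb0 : b ≠ 0 := nonZeroDivisors.ne_zero hb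
  have hbK : algebraMap D K b ≠ 0 := by
    simpa using (map_ne_zero_iff _ (IsFractionRing.injective D K)).mpr hb0
  have ha0 : a ≠ 0 := by
    rintro rfl
    simp at hab
    exact hx hab.symm
  have haK : algebraMap D K a ≠ 0 := (map_ne_zero_iff _ (IsFractionRing.injective D K)).mpr ha0
  obtain ⟨n, hn, hdvd | hdvd⟩ := h a b ha0 hb0
  · -- a^n ∣ b^n : x⁻ⁿ = bⁿ/aⁿ ∈ D
    obtain ⟨c, hc⟩ := hdvd
    refine ⟨n, hn, Or.inr ⟨c, ?_⟩⟩
    rw [← hab, div_pow, inv_div, eq_div_iff (pow_ne_zero _ haK), ← map_pow, ← map_pow, ← map_mul]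
    exact congrArg _ (by rw [hc]; ring)
  · obtain ⟨c, hc⟩ := hdvd
    refine ⟨n, hn, Or.inl ⟨c, ?_⟩⟩
    rw [← hab, div_pow, eq_div_iff (pow_ne_zero _ hbK), ← map_pow, ← map_pow, ← map_mul]
    exact congrArg _ (by rw [hc]; ring)

lemma isIntegral_of_pow_mem {x : K} {n : ℕ} (hn : 0 < n)
    (hx : x ^ n ∈ (algebraMap D K).range) : IsIntegral D x := by
  obtain ⟨e, he⟩ := hx
  exact IsIntegral.of_pow hn (he ▸ isIntegral_algebraMap)

end aux

/-- `D` is an AV-domain iff its integral closure `D̄` in its quotient field `K`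
is a valuation domain and `D ⊆ D̄` is a root extension. -/
theorem stmt_0 (D K : Type*) [CommRing D] [IsDomain D] [Field K] [Algebra D K]
    [IsFractionRing D K] :
    IsAVDomain D ↔
      ValuationRing (integralClosure D K) ∧
        ∀ x : integralClosure D K, ∃ n : ℕ, 0 < n ∧ (x : K) ^ n ∈ (algebraMap D K).range := by
  constructor
  · intro h
    constructor
    · refine { cond' := fun a b => ?_ }
      by_cases hb : (b : K) = 0
      · refine ⟨0, Or.inl ?_⟩
        ext
        simp [hb]
      by_cases ha : (a : K) = 0
      · refine ⟨0, Or.inr ?_⟩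
        ext
        simp [ha]
      have hx : (b : K) / (a : K) ≠ 0 := div_ne_zero hb ha
      obtain ⟨n, hn, hmem | hmem⟩ := av_dichotomy h ((b : K) / (a : K)) hx
      · have hint : IsIntegral D ((b : K) / (a : K)) := isIntegral_of_pow_mem hn hmem
        refine ⟨⟨_, hint⟩, Or.inl ?_⟩
        ext
        show (a : K) * ((b : K) / (a : K)) = b
        field_simp
      · rw [← inv_pow] at hmem
        have hint : IsIntegral D ((b : K) / (a : K))⁻¹ := isIntegral_of_pow_mem hn hmem
        refine ⟨⟨_, hint⟩, Or.inr ?_⟩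
        ext
        show (b : K) * ((b : K) / (a : K))⁻¹ = a
        field_simp
    · intro x
      by_cases hx : (x : K) = 0
      · exact ⟨1, one_pos, by rw [hx]; simp⟩
      obtain ⟨n, hn, hmem | hmem⟩ := av_dichotomy h (x : K) hx
      · exact ⟨n, hn, hmem⟩
      · obtain ⟨d, hd⟩ := hmem
        refine ⟨n, hn, mem_range_of_isIntegral_of_inv _ (x.2.pow n) d ?_⟩
        rw [hd, mul_inv_cancel₀ (pow_ne_zero _ hx)]
  · rintro ⟨hval, hroot⟩ a b ha hb
    set A := integralClosure D K
    set a' : A := algebraMap D A a with ha'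
    set b' : A := algebraMap D A b with hb'
    obtain ⟨c, hc | hc⟩ := ValuationRing.cond a' b'
    · obtain ⟨n, hn, d, hd⟩ := hroot c
      refine ⟨n, hn, Or.inl ⟨d, ?_⟩⟩
      apply IsFractionRing.injective D K
      have := congrArg (fun z : A => (z : K) ^ n) hc
      rw [map_mul, map_pow, map_pow]
      calc algebraMap D K (b) ^ n = ((b' : K)) ^ n := by rw [hb']; rfl
        _ = ((a' * c : A) : K) ^ n := by rw [hc]
        _ = (a' : K) ^ n * (c : K) ^ n := by push_cast; rw [mul_pow]
        _ = algebraMap D K a ^ n * algebraMap D K d := by rw [hd]; rfl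
    · obtain ⟨n, hn, d, hd⟩ := hroot c
      refine ⟨n, hn, Or.inr ⟨d, ?_⟩⟩
      apply IsFractionRing.injective D K
      rw [map_mul, map_pow, map_pow]
      calc algebraMap D K (a) ^ n = ((a' : K)) ^ n := by rw [ha']; rfl
        _ = ((b' * c : A) : K) ^ n := by rw [hc]
        _ = (b' : K) ^ n * (c : K) ^ n := by push_cast; rw [mul_pow]
        _ = algebraMap D K b ^ n * algebraMap D K d := by rw [hd]; rfl
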